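/- Let k be a field and Λ, A two finite-dimensional k-algebras. Let F be an exact additive functor from the category of finite-dimensional Λ-modules to the category of finite-dimensional A-modules such that F(X) = 0 implies X = 0. If 𝓝 is a hyperfinite family of finite-dimensional Λ-modules, then the family {F(X) : X ∈ 𝓝} of finite-dimensional A-modules is also hyperfinite. -/

import Mathlib

open CategoryTheory

/-- The `k`-dimension of a module over the `k`-algebra `A`, computed after
restricting scalars along `k → A`. -/
noncomputable def kdim (k A : Type) [Field k] [Ring A] [Algebra k A]
    (M : Type*) [AddCommGroup M] [Module A M] : ℕ :=
  Module.finrank k (RestrictScalars k A M)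

instance rsModuleAddCommGroup (k A : Type) [Field k] [Ring A] [Algebra k A]
    (M : Type*) [AddCommGroup M] [Module A M] :
    @Module k (RestrictScalars k A M) _
      (@AddCommGroup.toAddCommMonoid _ (instAddCommGroupRestrictScalars k A M)) :=
  RestrictScalars.module k A M

instance rsAddCommMonoidOfGroup (k A : Type) (M : Type*) [AddCommGroup M] :
    AddCommMonoid (RestrictScalars k A M) :=
  @AddCommGroup.toAddCommMonoid _ (instAddCommGroupRestrictScalars k A M)

set_option linter.unusedSectionVars false
set_option maxHeartbeats 1000000

section helpers
variable (k : Type) {A : Type} [Field k] [Ring A] [Algebra k A]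
variable {M N P : Type*} [AddCommGroup M] [Module A M] [AddCommGroup N] [Module A N]
  [AddCommGroup P] [Module A P]

/-- An `A`-linear map induces a `k`-linear map on `RestrictScalars`. -/
def rsMap (f : M →ₗ[A] N) : RestrictScalars k A M →ₗ[k] RestrictScalars k A N where
  toFun := f
  map_add' := f.map_add
  map_smul' c x := f.map_smul (algebraMap k A c) x

@[simp] lemma rsMap_apply (f : M →ₗ[A] N) (x : M) : rsMap k f x = f x := rfl

lemma kdim_eq_of_equiv (e : M ≃ₗ[A] N) : kdim k A M = kdim k A N :=
  (LinearEquiv.ofBijective (rsMap k (e : M →ₗ[A] N)) ⟨e.injective, e.surjective⟩).finrank_eq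

lemma fd_of_injective (f : M →ₗ[A] N) (hf : Function.Injective f)
    [FiniteDimensional k (RestrictScalars k A N)] :
    FiniteDimensional k (RestrictScalars k A M) :=
  FiniteDimensional.of_injective (rsMap k f) hf

lemma fd_of_surjective (f : M →ₗ[A] N) (hf : Function.Surjective f)
    [FiniteDimensional k (RestrictScalars k A M)] :
    FiniteDimensional k (RestrictScalars k A N) :=
  Module.Finite.of_surjective (rsMap k f) hf

lemma kdim_le_of_injective (f : M →ₗ[A] N) (hf : Function.Injective f)
    [FiniteDimensional k (RestrictScalars k A N)] :
    kdim k A M ≤ kdim k A N :=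
  (LinearMap.finrank_le_finrank_of_injective (f := rsMap k f) hf :
    Module.finrank k (RestrictScalars k A M) ≤ Module.finrank k (RestrictScalars k A N))

lemma subsingleton_rs (h : Subsingleton M) : Subsingleton (RestrictScalars k A M) :=
  ⟨fun a b => Subsingleton.elim (α := M) a b⟩

lemma nontrivial_rs (h : Nontrivial M) : Nontrivial (RestrictScalars k A M) :=
  ⟨(exists_pair_ne M).imp fun _ h => h⟩

lemma kdim_eq_zero (h : Subsingleton M) : kdim k A M = 0 := by
  have := subsingleton_rs k (A := A) h
  exact Module.finrank_zero_of_subsingleton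

lemma subsingleton_of_kdim_eq_zero [FiniteDimensional k (RestrictScalars k A M)]
    (h : kdim k A M = 0) : Subsingleton M := by
  have h' : Module.finrank k (RestrictScalars k A M) = 0 := h
  have : Subsingleton (RestrictScalars k A M) := Module.finrank_zero_iff.1 h'
  exact ⟨fun a b => Subsingleton.elim (α := RestrictScalars k A M) a b⟩

lemma one_le_kdim (h : Nontrivial M) [FiniteDimensional k (RestrictScalars k A M)] :
    1 ≤ kdim k A M := by
  have := nontrivial_rs k (A := A) h
  exact (Module.finrank_pos : 0 < Module.finrank k (RestrictScalars k A M))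

/-- `k`-dimension is additive along short exact sequences of `A`-modules. -/
lemma kdim_add (f : M →ₗ[A] N) (g : N →ₗ[A] P) (hf : Function.Injective f)
    (hg : Function.Surjective g) (h : LinearMap.range f = LinearMap.ker g)
    [FiniteDimensional k (RestrictScalars k A N)] :
    kdim k A N = kdim k A M + kdim k A P := by
  have h1 : LinearMap.range (rsMap k g) = ⊤ := LinearMap.range_eq_top.2 hg
  have h2 : LinearMap.ker (rsMap k g) = LinearMap.range (rsMap k f) := by
    ext x
    constructor
    · intro hx
      have : x ∈ LinearMap.ker g := hx
      rw [← h] at this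
      obtain ⟨y, hy⟩ := this
      exact ⟨y, hy⟩
    · rintro ⟨y, rfl⟩
      show (rsMap k f y) ∈ LinearMap.ker g
      rw [← h]
      exact ⟨y, rfl⟩
  have rn := LinearMap.finrank_range_add_finrank_ker (rsMap k g)
  rw [h1, h2] at rn
  have e1 : Module.finrank k (⊤ : Submodule k (RestrictScalars k A P)) = kdim k A P :=
    finrank_top k _
  have e2 : Module.finrank k (LinearMap.range (rsMap k f)) = kdim k A M :=
    ((LinearEquiv.ofInjective (rsMap k f) hf).finrank_eq).symm
  unfold kdim at e1 e2 ⊢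
  rw [← e1, ← e2, add_comm]
  exact rn.symm

end helpers

section rsequiv
variable (k A : Type) [Field k] [Ring A] [Algebra k A]

/-- id as k-linear equiv between RestrictScalars and the module itself (scalar tower case). -/
def rsEquiv (M : Type*) [AddCommGroup M] [Module A M] [Module k M] [IsScalarTower k A M] :
    RestrictScalars k A M ≃ₗ[k] M where
  toFun := id
  invFun := id
  map_add' _ _ := rfl
  map_smul' c x := algebraMap_smul A c (RestrictScalars.addEquiv k A M x)
  left_inv _ := rfl
  right_inv _ := rfl

end rsequiv

section modcat
variable {Λ : Type} [Ring Λ]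

/-- Short complex attached to a submodule. -/
def subSC (X : ModuleCat Λ) (p : Submodule Λ X) : ShortComplex (ModuleCat Λ) :=
  ShortComplex.mk (ModuleCat.ofHom p.subtype) (ModuleCat.ofHom p.mkQ)
    (by refine ModuleCat.hom_ext (LinearMap.ext fun x => ?_)
        show p.mkQ (p.subtype x) = 0
        simp [(Submodule.Quotient.mk_eq_zero p).2 x.2])

lemma subSC_shortExact (X : ModuleCat Λ) (p : Submodule Λ X) : (subSC X p).ShortExact where
  exact := (ShortComplex.moduleCat_exact_iff_range_eq_ker _).2
    (by show LinearMap.range p.subtype = LinearMap.ker p.mkQ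
        rw [Submodule.range_subtype, Submodule.ker_mkQ])
  mono_f := (ModuleCat.mono_iff_injective _).2 p.injective_subtype
  epi_g := (ModuleCat.epi_iff_surjective _).2 p.mkQ_surjective

universe uu

/-- Short complex attached to a cyclic submodule generated by `x`. -/
noncomputable def cycMap (X : ModuleCat.{uu} Λ) (x : X) : ULift.{uu} Λ →ₗ[Λ] ↥(Λ ∙ x) :=
  LinearMap.codRestrict (Λ ∙ x)
    ((LinearMap.toSpanSingleton Λ X x).comp
      (ULift.moduleEquiv : ULift.{uu} Λ ≃ₗ[Λ] Λ).toLinearMap)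
    (fun c => Submodule.smul_mem _ _ (Submodule.mem_span_singleton_self x))

lemma cycMap_surjective (X : ModuleCat.{uu} Λ) (x : X) : Function.Surjective (cycMap X x) := by
  rintro ⟨y, hy⟩
  obtain ⟨c, rfl⟩ := Submodule.mem_span_singleton.1 hy
  exact ⟨ULift.up c, rfl⟩

noncomputable def cycSC (X : ModuleCat.{uu} Λ) (x : X) : ShortComplex (ModuleCat Λ) :=
  ShortComplex.mk
    (ModuleCat.ofHom (X := ↥(LinearMap.ker (cycMap X x))) (Y := ULift.{uu} Λ)
      (LinearMap.ker (cycMap X x)).subtype)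
    (ModuleCat.ofHom (X := ULift.{uu} Λ) (Y := ↥(Λ ∙ x)) (cycMap X x))
    (by refine ModuleCat.hom_ext (LinearMap.ext fun y => ?_)
        exact y.2)

lemma cycSC_shortExact (X : ModuleCat.{uu} Λ) (x : X) : (cycSC X x).ShortExact where
  exact := (ShortComplex.moduleCat_exact_iff_range_eq_ker _).2
    (by show LinearMap.range (LinearMap.ker (cycMap X x)).subtype = LinearMap.ker (cycMap X x)
        rw [Submodule.range_subtype])
  mono_f := (ModuleCat.mono_iff_injective _).2 (Submodule.injective_subtype _)
  epi_g := (ModuleCat.epi_iff_surjective _).2 (cycMap_surjective X x)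

end modcat

section fsec
variable (k : Type) {Λ A : Type} [Field k] [Ring Λ] [Algebra k Λ] [Ring A] [Algebra k A]
variable (F : ModuleCat Λ ⥤ ModuleCat A) [F.Additive]

lemma subsingleton_fobj (X : ModuleCat Λ) (h : Subsingleton X) : Subsingleton (F.obj X) := by
  have hz : Limits.IsZero (F.obj X) :=
    F.map_isZero (@ModuleCat.isZero_of_subsingleton _ _ X h)
  have hid : 𝟙 (F.obj X) = 0 := hz.eq_of_src _ _
  refine ⟨fun a b => ?_⟩
  have ha : a = (0 : F.obj X ⟶ F.obj X).hom a := (LinearMap.congr_fun (congrArg ModuleCat.Hom.hom hid) a)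
  have hb : b = (0 : F.obj X ⟶ F.obj X).hom b := (LinearMap.congr_fun (congrArg ModuleCat.Hom.hom hid) b)
  rw [ha, hb]
  rfl

lemma nontrivial_fobj
    (hreflectsZero : ∀ X : ModuleCat Λ, Limits.IsZero (F.obj X) → Limits.IsZero X)
    (X : ModuleCat Λ) (h : Nontrivial X) : Nontrivial (F.obj X) := by
  by_contra hc
  have hsub : Subsingleton (F.obj X) := not_nontrivial_iff_subsingleton.1 hc
  have hz : Limits.IsZero X := hreflectsZero X (@ModuleCat.isZero_of_subsingleton _ _ _ hsub)
  have hid : 𝟙 X = 0 := hz.eq_of_src _ _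
  obtain ⟨a, b, hab⟩ := h
  apply hab
  have ha : a = (0 : X ⟶ X).hom a := (LinearMap.congr_fun (congrArg ModuleCat.Hom.hom hid) a)
  have hb : b = (0 : X ⟶ X).hom b := (LinearMap.congr_fun (congrArg ModuleCat.Hom.hom hid) b)
  rw [ha, hb]
  rfl


/-- kdim is additive for the image under F of a short exact sequence. -/
lemma kdim_fobj_add
    (hexact : ∀ S : ShortComplex (ModuleCat Λ), S.ShortExact → (S.map F).ShortExact)
    (S : ShortComplex (ModuleCat Λ)) (hS : S.ShortExact)
    [FiniteDimensional k (RestrictScalars k A (F.obj S.X₂))] :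
    kdim k A (F.obj S.X₂) = kdim k A (F.obj S.X₁) + kdim k A (F.obj S.X₃) := by
  have hse := hexact S hS
  have hinj : Function.Injective (F.map S.f).hom := (ModuleCat.mono_iff_injective _).1 hse.mono_f
  have hsurj : Function.Surjective (F.map S.g).hom := (ModuleCat.epi_iff_surjective _).1 hse.epi_g
  have hex : LinearMap.range (F.map S.f).hom = LinearMap.ker (F.map S.g).hom :=
    (ShortComplex.moduleCat_exact_iff_range_eq_ker _).1 hse.exact
  exact kdim_add k (F.map S.f).hom (F.map S.g).hom hinj hsurj hex

end fsec

section helpers3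
variable (k : Type) {A : Type} [Field k] [Ring A] [Algebra k A]
variable {M N : Type*} [AddCommGroup M] [Module A M] [AddCommGroup N] [Module A N]

lemma kdim_le_of_surjective (f : M →ₗ[A] N) (hf : Function.Surjective f)
    [FiniteDimensional k (RestrictScalars k A M)] : kdim k A N ≤ kdim k A M := by
  have h1 : LinearMap.range (rsMap k f) = ⊤ := LinearMap.range_eq_top.2 hf
  have h2 := LinearMap.finrank_range_le (rsMap k f)
  rw [h1, finrank_top] at h2
  exact h2
end helpers3

section key
universe v w
variable (k : Type) {Λ A : Type} [Field k] [Ring Λ] [Algebra k Λ] [FiniteDimensional k Λ]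
  [Ring A] [Algebra k A]
variable (F : ModuleCat.{v} Λ ⥤ ModuleCat.{w} A) [F.Additive]

lemma key
    (hexact : ∀ S : ShortComplex (ModuleCat Λ), S.ShortExact → (S.map F).ShortExact)
    (hfd : ∀ X : ModuleCat Λ, FiniteDimensional k (RestrictScalars k Λ X) →
      FiniteDimensional k (RestrictScalars k A (F.obj X)))
    (hreflectsZero : ∀ X : ModuleCat Λ, Limits.IsZero (F.obj X) → Limits.IsZero X) :
    ∀ (n : ℕ) (X : ModuleCat Λ), FiniteDimensional k (RestrictScalars k Λ X) → kdim k Λ X ≤ n →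
      kdim k A (F.obj X) ≤ kdim k A (F.obj (ModuleCat.of Λ (ULift.{v} Λ))) * kdim k Λ X ∧
      kdim k Λ X ≤ kdim k Λ (ModuleCat.of Λ (ULift.{v} Λ)) * kdim k A (F.obj X) := by
  haveI hΛfd : FiniteDimensional k (RestrictScalars k Λ Λ) :=
    Module.Finite.equiv (rsEquiv k Λ Λ).symm
  haveI hΛfdU : FiniteDimensional k (RestrictScalars k Λ (ULift.{v} Λ)) :=
    fd_of_injective k (ULift.moduleEquiv : ULift.{v} Λ ≃ₗ[Λ] Λ).toLinearMap
      (ULift.moduleEquiv : ULift.{v} Λ ≃ₗ[Λ] Λ).injective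
  haveI hΛfd' : FiniteDimensional k
    (RestrictScalars k Λ ↥(ModuleCat.of Λ (ULift.{v} Λ))) := hΛfdU
  have zerocase : ∀ X : ModuleCat Λ, FiniteDimensional k (RestrictScalars k Λ X) →
      kdim k Λ X = 0 →
      kdim k A (F.obj X) ≤ kdim k A (F.obj (ModuleCat.of Λ (ULift.{v} Λ))) * kdim k Λ X ∧
      kdim k Λ X ≤ kdim k Λ (ModuleCat.of Λ (ULift.{v} Λ)) * kdim k A (F.obj X) := by
    intro X hX h0
    haveI := hX
    have hsub : Subsingleton ↥X := subsingleton_of_kdim_eq_zero k h0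
    have h0' : kdim k A (F.obj X) = 0 := kdim_eq_zero k (subsingleton_fobj F X hsub)
    simp [h0, h0']
  intro n
  induction n with
  | zero =>
    intro X hX hle
    exact zerocase X hX (Nat.le_zero.1 hle)
  | succ n ih =>
    intro X hX hle
    haveI := hX
    by_cases h0 : kdim k Λ X = 0
    · exact zerocase X hX h0
    have hnt : Nontrivial ↥X := by
      by_contra hc
      exact h0 (kdim_eq_zero k (not_nontrivial_iff_subsingleton.1 hc))
    obtain ⟨x, hx⟩ := exists_ne (0 : X)
    haveI hpfd : FiniteDimensional k (RestrictScalars k Λ ↥(Λ ∙ x)) :=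
      fd_of_injective k (Λ ∙ x).subtype (Λ ∙ x).injective_subtype
    haveI hqfd : FiniteDimensional k (RestrictScalars k Λ (↥X ⧸ (Λ ∙ x))) :=
      fd_of_surjective k (Λ ∙ x).mkQ (Λ ∙ x).mkQ_surjective
    haveI hFX : FiniteDimensional k (RestrictScalars k A (F.obj X)) := hfd X hX
    haveI hFp : FiniteDimensional k
        (RestrictScalars k A (F.obj (ModuleCat.of Λ ↥(Λ ∙ x)))) := hfd _ hpfd
    haveI hFq : FiniteDimensional k
        (RestrictScalars k A (F.obj (ModuleCat.of Λ (↥X ⧸ (Λ ∙ x))))) := hfd _ hqfd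
    haveI hFΛ : FiniteDimensional k
        (RestrictScalars k A (F.obj (ModuleCat.of Λ (ULift.{v} Λ)))) := hfd _ hΛfdU
    haveI hFk : FiniteDimensional k
        (RestrictScalars k A (F.obj (ModuleCat.of Λ ↥(LinearMap.ker (cycMap X x))))) :=
      hfd _ (fd_of_injective k (LinearMap.ker (cycMap X x)).subtype
        (Submodule.injective_subtype _))
    have hpnt : Nontrivial ↥(Λ ∙ x) :=
      ⟨⟨⟨x, Submodule.mem_span_singleton_self x⟩, 0,
        fun h => hx (congrArg Subtype.val h)⟩⟩
    have H1 : kdim k Λ ↥X = kdim k Λ ↥(Λ ∙ x) + kdim k Λ (↥X ⧸ (Λ ∙ x)) :=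
      kdim_add k (Λ ∙ x).subtype (Λ ∙ x).mkQ (Λ ∙ x).injective_subtype
        (Λ ∙ x).mkQ_surjective
        (by rw [Submodule.range_subtype, Submodule.ker_mkQ])
    haveI : FiniteDimensional k (RestrictScalars k A (F.obj (subSC X (Λ ∙ x)).X₂)) := hFX
    have H2 : kdim k A (F.obj X) = kdim k A (F.obj (ModuleCat.of Λ ↥(Λ ∙ x)))
        + kdim k A (F.obj (ModuleCat.of Λ (↥X ⧸ (Λ ∙ x)))) :=
      kdim_fobj_add k F hexact (subSC X (Λ ∙ x)) (subSC_shortExact X (Λ ∙ x))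
    haveI : FiniteDimensional k (RestrictScalars k A (F.obj (cycSC X x).X₂)) := hFΛ
    have H3 : kdim k A (F.obj (ModuleCat.of Λ (ULift.{v} Λ))) =
        kdim k A (F.obj (ModuleCat.of Λ ↥(LinearMap.ker (cycMap X x))))
        + kdim k A (F.obj (ModuleCat.of Λ ↥(Λ ∙ x))) :=
      kdim_fobj_add k F hexact (cycSC X x) (cycSC_shortExact X x)
    have H4 : 1 ≤ kdim k Λ ↥(Λ ∙ x) := one_le_kdim k hpnt
    have H5 : kdim k Λ ↥(Λ ∙ x) ≤ kdim k Λ ↥(ModuleCat.of Λ (ULift.{v} Λ)) :=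
      kdim_le_of_surjective k (cycMap X x) (cycMap_surjective X x)
    have H6 : 1 ≤ kdim k A (F.obj (ModuleCat.of Λ ↥(Λ ∙ x))) :=
      one_le_kdim k (nontrivial_fobj F hreflectsZero _ hpnt)
    have H7 : kdim k Λ ↥(ModuleCat.of Λ (↥X ⧸ (Λ ∙ x))) ≤ n := by
      have : kdim k Λ ↥X ≤ n + 1 := hle
      show kdim k Λ (↥X ⧸ (Λ ∙ x)) ≤ n
      omega
    obtain ⟨IH1, IH2⟩ := ih (ModuleCat.of Λ (↥X ⧸ (Λ ∙ x))) hqfd H7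
    have IH1' : kdim k A (F.obj (ModuleCat.of Λ (↥X ⧸ (Λ ∙ x)))) ≤
        kdim k A (F.obj (ModuleCat.of Λ (ULift.{v} Λ))) * kdim k Λ (↥X ⧸ (Λ ∙ x)) := IH1
    have IH2' : kdim k Λ (↥X ⧸ (Λ ∙ x)) ≤
        kdim k Λ ↥(ModuleCat.of Λ (ULift.{v} Λ)) * kdim k A (F.obj (ModuleCat.of Λ (↥X ⧸ (Λ ∙ x)))) := IH2
    constructor
    · have h1q : 1 + kdim k Λ (↥X ⧸ (Λ ∙ x)) ≤ kdim k Λ ↥X := by omega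
      calc kdim k A (F.obj X)
          = kdim k A (F.obj (ModuleCat.of Λ ↥(Λ ∙ x)))
            + kdim k A (F.obj (ModuleCat.of Λ (↥X ⧸ (Λ ∙ x)))) := H2
        _ ≤ kdim k A (F.obj (ModuleCat.of Λ (ULift.{v} Λ)))
            + kdim k A (F.obj (ModuleCat.of Λ (ULift.{v} Λ))) * kdim k Λ (↥X ⧸ (Λ ∙ x)) :=
            Nat.add_le_add (by omega) IH1'
        _ = kdim k A (F.obj (ModuleCat.of Λ (ULift.{v} Λ))) * (1 + kdim k Λ (↥X ⧸ (Λ ∙ x))) := by ring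
        _ ≤ kdim k A (F.obj (ModuleCat.of Λ (ULift.{v} Λ))) * kdim k Λ ↥X :=
            Nat.mul_le_mul_left _ h1q
    · have h1fa : 1 + kdim k A (F.obj (ModuleCat.of Λ (↥X ⧸ (Λ ∙ x)))) ≤
          kdim k A (F.obj X) := by omega
      calc kdim k Λ ↥X
          = kdim k Λ ↥(Λ ∙ x) + kdim k Λ (↥X ⧸ (Λ ∙ x)) := H1
        _ ≤ kdim k Λ ↥(ModuleCat.of Λ (ULift.{v} Λ))
            + kdim k Λ ↥(ModuleCat.of Λ (ULift.{v} Λ))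
              * kdim k A (F.obj (ModuleCat.of Λ (↥X ⧸ (Λ ∙ x)))) :=
            Nat.add_le_add H5 IH2'
        _ = kdim k Λ ↥(ModuleCat.of Λ (ULift.{v} Λ))
            * (1 + kdim k A (F.obj (ModuleCat.of Λ (↥X ⧸ (Λ ∙ x))))) := by ring
        _ ≤ kdim k Λ ↥(ModuleCat.of Λ (ULift.{v} Λ)) * kdim k A (F.obj X) :=
            Nat.mul_le_mul_left _ h1fa

end key

section dec
variable {Λ : Type} [Ring Λ]

variable (Y : ModuleCat Λ) {t : ℕ} (Z : Fin t → Submodule Λ Y)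

/-- inclusion of the j-th component. -/
def inclhom (j : Fin t) : ModuleCat.of Λ ↥(Z j) ⟶ Y := ModuleCat.ofHom (Z j).subtype

/-- projection onto the j-th component of an internal direct sum decomposition. -/
noncomputable def projhom (hZ : DirectSum.IsInternal Z) (j : Fin t) :
    Y ⟶ ModuleCat.of Λ ↥(Z j) :=
  ModuleCat.ofHom ((DirectSum.component Λ (Fin t) (fun i => ↥(Z i)) j).comp
    (LinearEquiv.ofBijective (DirectSum.coeLinearMap Z) hZ).symm.toLinearMap)

variable (hZ : DirectSum.IsInternal Z)

lemma incl_proj_same (j : Fin t) : inclhom Y Z j ≫ projhom Y Z hZ j = 𝟙 _ := by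
  refine ModuleCat.hom_ext (LinearMap.ext fun z => ?_)
  show (DirectSum.component Λ (Fin t) (fun i => ↥(Z i)) j)
    ((LinearEquiv.ofBijective (DirectSum.coeLinearMap Z) hZ).symm ((Z j).subtype z)) = z
  exact hZ.ofBijective_coeLinearMap_same z

lemma incl_proj_ne {i j : Fin t} (hij : i ≠ j) : inclhom Y Z i ≫ projhom Y Z hZ j = 0 := by
  refine ModuleCat.hom_ext (LinearMap.ext fun z => ?_)
  show (DirectSum.component Λ (Fin t) (fun i => ↥(Z i)) j)
    ((LinearEquiv.ofBijective (DirectSum.coeLinearMap Z) hZ).symm ((Z i).subtype z)) = 0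
  exact hZ.ofBijective_coeLinearMap_of_ne hij z

lemma sum_proj_incl : (∑ j, projhom Y Z hZ j ≫ inclhom Y Z j) = 𝟙 Y := by
  ext y
  rw [ModuleCat.hom_sum, LinearMap.sum_apply]
  show (∑ j, (Z j).subtype
      ((DirectSum.component Λ (Fin t) (fun i => ↥(Z i)) j)
        ((LinearEquiv.ofBijective (DirectSum.coeLinearMap Z) hZ).symm y))) = y
  set E := LinearEquiv.ofBijective (DirectSum.coeLinearMap Z) hZ with hE
  have h1 : y = E (E.symm y) := (E.apply_symm_apply y).symm
  conv_rhs => rw [h1]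
  have h2 : E.symm y = ∑ j, DirectSum.of (fun i => ↥(Z i)) j ((E.symm y) j) :=
    (DirectSum.sum_univ_of _).symm
  conv_rhs => rw [h2]
  rw [map_sum]
  refine Finset.sum_congr rfl fun j _ => ?_
  show ((E.symm y) j : ↥Y) = E (DirectSum.of (fun i => ↥(Z i)) j ((E.symm y) j))
  exact (DirectSum.coeLinearMap_of Z j _).symm

end dec

section fdec
variable (k : Type) {Λ A : Type} [Field k] [Ring Λ] [Algebra k Λ] [Ring A] [Algebra k A]

variable (F : ModuleCat Λ ⥤ ModuleCat A) [F.Additive]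

lemma decomp (Y M' : ModuleCat Λ) (ι : Y ⟶ M') (hιinj : Function.Injective (F.map ι).hom)
    {t : ℕ} (Z : Fin t → Submodule Λ Y) (hZ : DirectSum.IsInternal Z) :
    ∃ W : Fin t → Submodule A ↥(LinearMap.range (F.map ι).hom),
      DirectSum.IsInternal W ∧
      ∀ j, Nonempty (↥(W j) ≃ₗ[A] ↥(F.obj (ModuleCat.of Λ ↥(Z j)))) := by
  classical
  set eN := LinearEquiv.ofInjective ((F.map ι).hom : ↥(F.obj Y) →ₗ[A] ↥(F.obj M')) hιinj with heN
  set e : Fin t → (F.obj Y ⟶ F.obj Y) :=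
    fun j => F.map (projhom Y Z hZ j ≫ inclhom Y Z j) with he
  have hsum : (∑ j, e j) = 𝟙 (F.obj Y) := by
    rw [he, ← F.map_sum, sum_proj_incl Y Z hZ, F.map_id]
  have hsplit : ∀ j, F.map (inclhom Y Z j) ≫ F.map (projhom Y Z hZ j) = 𝟙 _ := by
    intro j
    rw [← F.map_comp, incl_proj_same Y Z hZ j, F.map_id]
  have hFinj : ∀ j, Function.Injective (F.map (inclhom Y Z j)).hom := by
    intro j
    refine Function.LeftInverse.injective (g := (F.map (projhom Y Z hZ j)).hom) fun a => ?_
    have := LinearMap.congr_fun (congrArg ModuleCat.Hom.hom (hsplit j)) a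
    exact this
  -- action of e i on the range of F.map (inclhom j)
  have hei : ∀ (i j : Fin t) (u : ↥(F.obj (ModuleCat.of Λ ↥(Z j)))),
      (e i).hom ((F.map (inclhom Y Z j)).hom u) =
        if i = j then (F.map (inclhom Y Z j)).hom u else 0 := by
    intro i j u
    have hcomp : (e i).hom ((F.map (inclhom Y Z j)).hom u) =
        (F.map (inclhom Y Z j ≫ (projhom Y Z hZ i ≫ inclhom Y Z i))).hom u := by
      rw [F.map_comp]
      rfl
    by_cases hij : i = j
    · subst hij
      rw [if_pos rfl, hcomp, ← Category.assoc, incl_proj_same Y Z hZ i, Category.id_comp]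
    · rw [if_neg hij, hcomp, ← Category.assoc, incl_proj_ne Y Z hZ (Ne.symm hij),
        Limits.zero_comp, F.map_zero]
      rfl
  -- the candidate submodules
  set W : Fin t → Submodule A ↥(LinearMap.range (F.map ι).hom) :=
    fun j => (LinearMap.range (F.map (inclhom Y Z j)).hom).map eN.toLinearMap with hW
  refine ⟨W, ?_, ?_⟩
  · show Function.Bijective (DirectSum.coeLinearMap W)
    constructor
    · -- injectivity
      rw [injective_iff_map_eq_zero]
      intro d hd
      have Hmaps : ∀ i : Fin t,
          (eN.toLinearMap ∘ₗ ((e i).hom : ↥(F.obj Y) →ₗ[A] ↥(F.obj Y)) ∘ₗ eN.symm.toLinearMap) ∘ₗ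
              DirectSum.coeLinearMap W =
            (W i).subtype ∘ₗ DirectSum.component A (Fin t) (fun j => ↥(W j)) i := by
        intro i
        apply DirectSum.linearMap_ext
        intro j
        apply LinearMap.ext
        intro w
        obtain ⟨v, ⟨u, rfl⟩, hw⟩ := w.2
        have hcoe : DirectSum.coeLinearMap W (DirectSum.lof A (Fin t) (fun j => ↥(W j)) j w)
            = (w : ↥(LinearMap.range (F.map ι).hom)) := DirectSum.coeLinearMap_of W j w
        simp only [LinearMap.comp_apply]
        rw [hcoe, ← hw]
        simp only [LinearEquiv.coe_coe, LinearEquiv.symm_apply_apply]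
        rw [hei i j u]
        have hw' : eN ((F.map (inclhom Y Z j)).hom u) = (w : ↥(LinearMap.range (F.map ι).hom)) := hw
        by_cases hij : i = j
        · subst hij
          rw [if_pos rfl]
          show eN ((F.map (inclhom Y Z i)).hom u) = _
          rw [hw']
          have : DirectSum.component A (Fin t) (fun j => ↥(W j)) i
              (DirectSum.lof A (Fin t) (fun j => ↥(W j)) i w) = w :=
            DirectSum.component.lof_self (R := A) (M := fun j => ↥(W j)) i w
          rw [this]
          rfl
        · rw [if_neg hij]
          have : DirectSum.component A (Fin t) (fun j => ↥(W j)) i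
              (DirectSum.lof A (Fin t) (fun j => ↥(W j)) j w) = 0 := by
            have := DirectSum.component.of (R := A) (M := fun j => ↥(W j)) i j w
            rwa [dif_neg (fun h => hij (h.symm))] at this
          rw [this]
          simp
      refine DFinsupp.ext fun i => ?_
      have := DFunLike.congr_fun (Hmaps i) d
      simp only [LinearMap.comp_apply] at this
      rw [hd] at this
      simp only [map_zero] at this
      exact Subtype.ext this.symm
    · -- surjectivity
      intro y
      set z := eN.symm y with hz
      have hmem : ∀ j, eN ((e j).hom z) ∈ W j := by
        intro j
        refine ⟨(e j).hom z, ⟨(F.map (projhom Y Z hZ j)).hom z, ?_⟩, rfl⟩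
        show (F.map (projhom Y Z hZ j) ≫ F.map (inclhom Y Z j)).hom z = (e j).hom z
        rw [← F.map_comp]
      refine ⟨∑ j, DirectSum.lof A (Fin t) (fun j => ↥(W j)) j ⟨eN ((e j).hom z), hmem j⟩, ?_⟩
      rw [map_sum]
      have : ∀ j, DirectSum.coeLinearMap W
          (DirectSum.lof A (Fin t) (fun j => ↥(W j)) j ⟨eN ((e j).hom z), hmem j⟩)
          = eN ((e j).hom z) := fun j => DirectSum.coeLinearMap_of W j _
      rw [Finset.sum_congr rfl fun j _ => this j]
      rw [← map_sum]
      have hez : (∑ j, (e j).hom z) = z := by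
        have := LinearMap.congr_fun (congrArg ModuleCat.Hom.hom hsum) z
        rw [ModuleCat.hom_sum, LinearMap.sum_apply] at this
        exact this
      rw [hez, hz, eN.apply_symm_apply]
  · -- dimensions
    intro j
    exact ⟨((Submodule.equivMapOfInjective eN.toLinearMap eN.injective
        (LinearMap.range (F.map (inclhom Y Z j)).hom)).symm.trans
      (LinearEquiv.ofInjective ((F.map (inclhom Y Z j)).hom :
        ↥(F.obj (ModuleCat.of Λ ↥(Z j))) →ₗ[A] ↥(F.obj Y)) (hFinj j)).symm)⟩

end fdec

/-- The inclusion morphism of a submodule, as used in `subSC`. -/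
def inclhom' {Λ : Type} [Ring Λ] (X : ModuleCat Λ) (p : Submodule Λ X) :
    ModuleCat.of Λ ↥p ⟶ X := ModuleCat.ofHom p.subtype

/-- A set of (finite-dimensional) `A`-modules is *hyperfinite* if for every `ε > 0`
there is a bound `L` such that every member `M` contains an `A`-submodule `N` with
`dim_k N ≥ (1 - ε) * dim_k M` which decomposes as a (finite, internal) direct sum of
`A`-modules each of `k`-dimension at most `L`. -/
def IsHyperfinite (k A : Type) [Field k] [Ring A] [Algebra k A]
    (ℳ : Set (ModuleCat A)) : Prop :=
  ∀ ε : ℝ, 0 < ε → ∃ L : ℕ, 0 < L ∧ ∀ M ∈ ℳ,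
    ∃ N : Submodule A M,
      (1 - ε) * (kdim k A M : ℝ) ≤ (kdim k A N : ℝ) ∧
      ∃ (t : ℕ) (Z : Fin t → Submodule A N),
        DirectSum.IsInternal Z ∧ ∀ j, kdim k A (Z j) ≤ L

/-- Proposition: let `F` be an exact additive functor between the module categories of two
finite-dimensional `k`-algebras (mapping finite-dimensional modules to finite-dimensional
modules) such that `F(X) = 0` implies `X = 0`.  Then the image under `F` of a hyperfinite
family of finite-dimensional modules is again hyperfinite.  (Exactness is expressed by:
`F` sends short exact sequences to short exact sequences.) -/
theorem isHyperfinite_image_of_exact_reflectsZero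
    (k Λ A : Type) [Field k] [Ring Λ] [Algebra k Λ] [FiniteDimensional k Λ]
    [Ring A] [Algebra k A] [FiniteDimensional k A]
    (F : ModuleCat Λ ⥤ ModuleCat A) [F.Additive]
    (hexact : ∀ S : ShortComplex (ModuleCat Λ), S.ShortExact → (S.map F).ShortExact)
    (hfd : ∀ X : ModuleCat Λ, @FiniteDimensional k (RestrictScalars k Λ X) _ _ (RestrictScalars.module k Λ X) →
      @FiniteDimensional k (RestrictScalars k A (F.obj X)) _ _
        (RestrictScalars.module k A (F.obj X)))
    (hreflectsZero : ∀ X : ModuleCat Λ, Limits.IsZero (F.obj X) → Limits.IsZero X)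
    (𝓝 : Set (ModuleCat Λ))
    (h𝓝fd : ∀ M ∈ 𝓝, @FiniteDimensional k (RestrictScalars k Λ M) _ _
      (RestrictScalars.module k Λ M))
    (h𝓝 : IsHyperfinite k Λ 𝓝) :
    IsHyperfinite k A (F.obj '' 𝓝) := by

  obtain ⟨c2, hc2b⟩ : ∃ c2 : ℕ, ∀ X : ModuleCat Λ,
      FiniteDimensional k (RestrictScalars k Λ X) →
      kdim k A (F.obj X) ≤ c2 * kdim k Λ X :=
    ⟨_, fun X hX => (key k F hexact hfd hreflectsZero (kdim k Λ X) X hX le_rfl).1⟩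
  obtain ⟨d, hdb⟩ : ∃ d : ℕ, ∀ X : ModuleCat Λ,
      FiniteDimensional k (RestrictScalars k Λ X) →
      kdim k Λ X ≤ d * kdim k A (F.obj X) :=
    ⟨_, fun X hX => (key k F hexact hfd hreflectsZero (kdim k Λ X) X hX le_rfl).2⟩
  intro ε hε
  have hpos : (0:ℝ) < ((c2:ℝ) + 1) * ((d:ℝ) + 1) := by positivity
  have hε' : 0 < ε / (((c2:ℝ) + 1) * ((d:ℝ) + 1)) := div_pos hε hpos
  obtain ⟨L', hL', hH⟩ := h𝓝 (ε / (((c2:ℝ) + 1) * ((d:ℝ) + 1))) hε'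
  refine ⟨(c2 + 1) * L', Nat.mul_pos (Nat.succ_pos _) hL', ?_⟩
  rintro FM ⟨M, hM, rfl⟩
  haveI hMfd : FiniteDimensional k (RestrictScalars k Λ ↥M) := h𝓝fd M hM
  obtain ⟨N, hNdim, t, Z, hZint, hZdim⟩ := hH M hM
  haveI hNfd : FiniteDimensional k (RestrictScalars k Λ ↥N) :=
    fd_of_injective k N.subtype N.injective_subtype
  haveI hQfd : FiniteDimensional k (RestrictScalars k Λ (↥M ⧸ N)) :=
    fd_of_surjective k N.mkQ N.mkQ_surjective
  haveI hFM : FiniteDimensional k (RestrictScalars k A (F.obj M)) := hfd M hMfd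
  haveI hFN : FiniteDimensional k
      (RestrictScalars k A (F.obj (ModuleCat.of Λ ↥N))) := hfd _ hNfd
  haveI hFQ : FiniteDimensional k
      (RestrictScalars k A (F.obj (ModuleCat.of Λ (↥M ⧸ N)))) := hfd _ hQfd
  -- the embedding of F(N) into F(M)
  have hse := hexact _ (subSC_shortExact M N)
  have hιinj : Function.Injective (F.map (inclhom' M N)).hom :=
    (ModuleCat.mono_iff_injective _).1 hse.mono_f
  have hkdimN' : kdim k A ↥(LinearMap.range (F.map (inclhom' M N)).hom)
      = kdim k A ↥(F.obj (ModuleCat.of Λ ↥N)) :=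
    kdim_eq_of_equiv k (LinearEquiv.ofInjective
      ((F.map (inclhom' M N)).hom : ↥(F.obj (ModuleCat.of Λ ↥N)) →ₗ[A] ↥(F.obj M)) hιinj).symm
  haveI : FiniteDimensional k (RestrictScalars k A (F.obj (subSC M N).X₂)) := hFM
  have HA : kdim k A ↥(F.obj M) = kdim k A ↥(F.obj (ModuleCat.of Λ ↥N))
      + kdim k A (F.obj (ModuleCat.of Λ (↥M ⧸ N))) :=
    kdim_fobj_add k F hexact (subSC M N) (subSC_shortExact M N)
  have HΛ : kdim k Λ ↥M = kdim k Λ ↥N + kdim k Λ (↥M ⧸ N) :=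
    kdim_add k N.subtype N.mkQ N.injective_subtype N.mkQ_surjective
      (by rw [Submodule.range_subtype, Submodule.ker_mkQ])
  have K1 : kdim k A (F.obj (ModuleCat.of Λ (↥M ⧸ N))) ≤ c2 * kdim k Λ (↥M ⧸ N) :=
    hc2b _ hQfd
  have K2 : kdim k Λ ↥M ≤ d * kdim k A ↥(F.obj M) := hdb M hMfd
  obtain ⟨W, hWint, hWequiv⟩ := decomp F (ModuleCat.of Λ ↥N) M (inclhom' M N) hιinj Z hZint
  refine ⟨LinearMap.range (F.map (inclhom' M N)).hom, ?_, t, W, hWint, ?_⟩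
  · -- dimension estimate
    rw [hkdimN']
    have R1 : (kdim k Λ ↥M : ℝ) = (kdim k Λ ↥N : ℝ) + (kdim k Λ (↥M ⧸ N) : ℝ) := by
      exact_mod_cast HΛ
    have R2 : (kdim k A ↥(F.obj M) : ℝ) = (kdim k A ↥(F.obj (ModuleCat.of Λ ↥N)) : ℝ)
        + (kdim k A (F.obj (ModuleCat.of Λ (↥M ⧸ N))) : ℝ) := by exact_mod_cast HA
    have R3 : (kdim k A (F.obj (ModuleCat.of Λ (↥M ⧸ N))) : ℝ)
        ≤ (c2:ℝ) * (kdim k Λ (↥M ⧸ N) : ℝ) := by exact_mod_cast K1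
    have R4 : (kdim k Λ ↥M : ℝ) ≤ (d:ℝ) * (kdim k A ↥(F.obj M) : ℝ) := by exact_mod_cast K2
    have R5 : (1 - ε / (((c2:ℝ) + 1) * ((d:ℝ) + 1))) * (kdim k Λ ↥M : ℝ)
        ≤ (kdim k Λ ↥N : ℝ) := hNdim
    set εp : ℝ := ε / (((c2:ℝ) + 1) * ((d:ℝ) + 1)) with hεp
    set a : ℝ := (kdim k Λ ↥M : ℝ) with ha
    set b : ℝ := (kdim k Λ ↥N : ℝ) with hb
    set q : ℝ := (kdim k Λ (↥M ⧸ N) : ℝ) with hq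
    set fa : ℝ := (kdim k A ↥(F.obj M) : ℝ) with hfa
    set fb : ℝ := (kdim k A ↥(F.obj (ModuleCat.of Λ ↥N)) : ℝ) with hfb
    set fq : ℝ := (kdim k A (F.obj (ModuleCat.of Λ (↥M ⧸ N))) : ℝ) with hfq
    have hc2n : (0:ℝ) ≤ (c2:ℝ) := Nat.cast_nonneg _
    have hdn : (0:ℝ) ≤ (d:ℝ) := Nat.cast_nonneg _
    have han : (0:ℝ) ≤ a := by rw [ha]; exact Nat.cast_nonneg _
    have hfan : (0:ℝ) ≤ fa := by rw [hfa]; exact Nat.cast_nonneg _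
    have hqn : (0:ℝ) ≤ q := by rw [hq]; exact Nat.cast_nonneg _
    have hkey : (((c2:ℝ) + 1) * ((d:ℝ) + 1)) * εp = ε := by
      rw [hεp]
      field_simp
    have h1 : q ≤ εp * a := by nlinarith [R1, R5]
    have h2 : fq ≤ (c2:ℝ) * (εp * a) := by
      nlinarith [mul_le_mul_of_nonneg_left h1 hc2n, R3]
    have h3 : fq ≤ ε * fa := by
      have h4 : (c2:ℝ) * (εp * a) ≤ (c2:ℝ) * (εp * ((d:ℝ) * fa)) := by
        have h6 := mul_le_mul_of_nonneg_left R4 hε'.le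
        exact mul_le_mul_of_nonneg_left h6 hc2n
      have h5 : (c2:ℝ) * (εp * ((d:ℝ) * fa)) ≤ (((c2:ℝ) + 1) * ((d:ℝ) + 1)) * εp * fa := by
        nlinarith [mul_nonneg hε'.le hfan, hε'.le, hfan]
      calc fq ≤ (c2:ℝ) * (εp * a) := h2
        _ ≤ (c2:ℝ) * (εp * ((d:ℝ) * fa)) := h4
        _ ≤ (((c2:ℝ) + 1) * ((d:ℝ) + 1)) * εp * fa := h5
        _ = ε * fa := by rw [hkey]
    linarith [R2]
  · -- bound on the pieces
    intro j
    haveI hZjfd : FiniteDimensional k (RestrictScalars k Λ ↥(Z j)) :=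
      fd_of_injective k (Z j).subtype (Z j).injective_subtype
    have e1 : kdim k A ↥(W j) = kdim k A ↥(F.obj (ModuleCat.of Λ ↥(Z j))) :=
      kdim_eq_of_equiv k (hWequiv j).some
    have K3 : kdim k A (F.obj (ModuleCat.of Λ ↥(Z j))) ≤ c2 * kdim k Λ ↥(Z j) :=
      hc2b _ hZjfd
    calc kdim k A ↥(W j) = kdim k A ↥(F.obj (ModuleCat.of Λ ↥(Z j))) := e1
      _ ≤ c2 * kdim k Λ ↥(Z j) := K3
      _ ≤ c2 * L' := Nat.mul_le_mul_left _ (hZdim j)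
      _ ≤ (c2 + 1) * L' := Nat.mul_le_mul_right _ (Nat.le_succ _)
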